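/- Let E be a category with finite limits, i : D ⥤ E a fully faithful functor admitting a left adjoint L, F = L ⋙ i the associated idempotent endofunctor with unit η, and assume F preserves finite limits. If a morphism g of E satisfies u ⊥ g for every F-equivalence u, then g is F-local. -/

import Mathlib

open CategoryTheory Limits

/-- `f` is orthogonal to `g` (`f ⊥ g`): every commutative square from `f` to `g` admits a
unique diagonal filler. -/
def Orth {E : Type*} [Category E] {A B X Y : E} (f : A ⟶ B) (g : X ⟶ Y) : Prop :=
  ∀ (u : A ⟶ X) (v : B ⟶ Y), u ≫ g = f ≫ v →
    ∃! d : B ⟶ X, f ≫ d = u ∧ d ≫ g = v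

/-- For a reflective localization `L ⊣ i` with `F = L ⋙ i` preserving finite
limits, a morphism to which every `F`-equivalence is orthogonal is `F`-local. -/
theorem goodwillie_stmt_4 {D E : Type*} [Category D] [Category E] [HasFiniteLimits E]
    (L : E ⥤ D) (i : D ⥤ E) [i.Full] [i.Faithful] (adj : L ⊣ i)
    [PreservesFiniteLimits (L ⋙ i)]
    {X Y : E} (g : X ⟶ Y)
    (h : ∀ {A B : E} (u : A ⟶ B), IsIso ((L ⋙ i).map u) → Orth u g) :
    IsPullback (adj.unit.app X) g ((L ⋙ i).map g) (adj.unit.app Y) := by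
  set F := L ⋙ i with hF
  set η := adj.unit with hη
  -- the naturality square
  have comm : η.app X ≫ F.map g = g ≫ η.app Y := (η.naturality g).symm
  set p₁ : pullback (F.map g) (η.app Y) ⟶ F.obj X := pullback.fst _ _ with hp₁
  set p₂ : pullback (F.map g) (η.app Y) ⟶ Y := pullback.snd _ _ with hp₂
  set k : X ⟶ pullback (F.map g) (η.app Y) := pullback.lift (η.app X) g comm with hk
  have hk₁ : k ≫ p₁ = η.app X := pullback.lift_fst _ _ _
  have hk₂ : k ≫ p₂ = g := pullback.lift_snd _ _ _
  -- F of the pullback square is a pullback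
  have sq : IsPullback p₁ p₂ (F.map g) (η.app Y) := IsPullback.of_hasPullback _ _
  have Fsq : IsPullback (F.map p₁) (F.map p₂) (F.map (F.map g)) (F.map (η.app Y)) :=
    sq.map F
  -- `F.map (η.app Z)` is an isomorphism for all `Z`
  have hFη : ∀ Z : E, IsIso (F.map (η.app Z)) := fun Z => by
    have : IsIso (L.map (η.app Z)) := inferInstance
    show IsIso (i.map (L.map (η.app Z)))
    infer_instance
  have hFηY : IsIso (F.map (η.app Y)) := hFη Y
  have hFηX : IsIso (F.map (η.app X)) := hFη X
  -- hence `F.map p₁` is an isomorphism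
  have hFp₁ : IsIso (F.map p₁) := by
    refine ⟨Fsq.lift (𝟙 _) (F.map (F.map g) ≫ inv (F.map (η.app Y))) (by simp), ?_, ?_⟩
    · apply Fsq.hom_ext
      · simp
      · have := Fsq.w
        simp [reassoc_of% this]
    · simp
  -- hence `F.map k` is an isomorphism
  have hFk : IsIso (F.map k) := by
    have e : F.map k ≫ F.map p₁ = F.map (η.app X) := by rw [← F.map_comp, hk₁]
    have : IsIso (F.map k ≫ F.map p₁) := e ▸ hFηX
    exact IsIso.of_isIso_comp_right (F.map k) (F.map p₁)
  -- orthogonality gives a retraction `d` of `k`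
  obtain ⟨d, ⟨hd₁, hd₂⟩, -⟩ := h k hFk (𝟙 X) p₂ (by simp [hk₂])
  -- `F.map d` is the inverse of `F.map k`
  have hFdk : F.map d = inv (F.map k) := by
    apply IsIso.eq_inv_of_hom_inv_id
    rw [← F.map_comp, hd₁, F.map_id]
  -- `d ≫ k = 𝟙`
  have hηFX : IsIso (η.app (F.obj X)) := by
    show IsIso (adj.unit.app (i.obj (L.obj X)))
    infer_instance
  have hdk : d ≫ k = 𝟙 _ := by
    apply pullback.hom_ext
    · rw [Category.assoc, hk₁, Category.id_comp]
      -- show `d ≫ η.app X = p₁` by cancelling the iso `η.app (F.obj X)`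
      have nat : ∀ {A B : E} (f : A ⟶ B), f ≫ η.app B = η.app A ≫ F.map f := fun f => by
        exact η.naturality f
      have key : F.map (d ≫ η.app X) = F.map p₁ := by
        rw [F.map_comp, hFdk]
        have e : F.map (η.app X) = F.map k ≫ F.map p₁ := by rw [← F.map_comp, hk₁]
        rw [e, IsIso.inv_hom_id_assoc]
      rw [← cancel_mono (η.app (F.obj X)), ← hp₁,
        nat (d ≫ η.app X), nat p₁, key]
    · rw [Category.assoc, hk₂, hd₂, Category.id_comp]
  have : IsIso k := ⟨d, hd₁, hdk⟩
  exact IsPullback.of_iso_pullback ⟨comm⟩ (asIso k) hk₁ hk₂
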